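/- Loosened one-shot Gelfand–Pinsker bound: Under the setup of the one-shot Gelfand–Pinsker theorem (state pmf q_S, channel q_{Y|X,S}, conditional pmf q_{U|S}, function x(u,s), positive integers M, J, and joint pmf q(u,s,x,y) = q(s)q(u|s)1[x = x(u,s)]q(y|x,s)), for every γ > 0 there exists an M-code whose probability of error satisfies P(M̂ ≠ M) ≤ P_q[ log J − i_q(U;S) < γ or i_q(U;Y) − log(M·J) < γ ] + 3·2^{−γ}, where the probability on the right is computed for (U,S,Y) distributed according to q. -/

import Mathlib

open scoped BigOperators

/-- A pmf on a finite type, represented by a nonnegative real-valued function summing to 1. -/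
structure FinPMF (α : Type) [Fintype α] where
  p : α → ℝ
  nonneg : ∀ a, 0 ≤ p a
  sum_eq_one : ∑ a, p a = 1

variable {𝓢 𝓤 𝓧 𝓨 : Type} [Fintype 𝓢] [Fintype 𝓤] [Fintype 𝓧] [Fintype 𝓨]

/-- The joint pmf on `(u, s, y)` induced by
`q(u,s,x,y) = q(s) q(u|s) 1[x = x(u,s)] q(y|x,s)` after marginalizing out the
deterministic `x`. -/
noncomputable def qUSY (qS : FinPMF 𝓢) (qU : 𝓢 → FinPMF 𝓤)
    (W : 𝓧 → 𝓢 → FinPMF 𝓨) (f : 𝓤 → 𝓢 → 𝓧) (u : 𝓤) (s : 𝓢) (y : 𝓨) : ℝ :=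
  qS.p s * (qU s).p u * (W (f u s) s).p y

/-- Information density `i_q(U;S)` evaluated at `(u,s)`. -/
noncomputable def iUS (qS : FinPMF 𝓢) (qU : 𝓢 → FinPMF 𝓤) (u : 𝓤) (s : 𝓢) : ℝ :=
  Real.logb 2 ((qS.p s * (qU s).p u) /
    ((∑ s', qS.p s' * (qU s').p u) * qS.p s))

/-- Information density `i_q(U;Y)` evaluated at `(u,y)`. -/
noncomputable def iUY (qS : FinPMF 𝓢) (qU : 𝓢 → FinPMF 𝓤)
    (W : 𝓧 → 𝓢 → FinPMF 𝓨) (f : 𝓤 → 𝓢 → 𝓧) (u : 𝓤) (y : 𝓨) : ℝ :=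
  Real.logb 2 ((∑ s, qUSY qS qU W f u s y) /
    ((∑ s', qS.p s' * (qU s').p u) * (∑ u', ∑ s', qUSY qS qU W f u' s' y)))

/-- Probability of correct decoding for an `M`-code over the state-dependent channel:
message uniform on `Fin M` independent of `S ~ qS`, `X` generated by the stochastic
encoder from `(m, s)`, `Y` by the channel from `(x, s)`, `M̂` by the stochastic decoder. -/
noncomputable def pCorrectGP (M : ℕ) (qS : FinPMF 𝓢) (W : 𝓧 → 𝓢 → FinPMF 𝓨)
    (enc : Fin M → 𝓢 → FinPMF 𝓧) (dec : 𝓨 → FinPMF (Fin M)) : ℝ :=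
  ∑ m : Fin M, ∑ s : 𝓢, ∑ x : 𝓧, ∑ y : 𝓨,
    (1 / (M : ℝ)) * qS.p s * (enc m s).p x * (W x s).p y * (dec y).p m

open Classical in
/-- Indicator of a proposition, as a real number. -/
noncomputable def ind (P : Prop) : ℝ := if P then 1 else 0

/-- Probability of erroneous decoding `P(M̂ ≠ M)` for an `M`-code over the
state-dependent channel. -/
noncomputable def pErrorGP (M : ℕ) (qS : FinPMF 𝓢) (W : 𝓧 → 𝓢 → FinPMF 𝓨)
    (enc : Fin M → 𝓢 → FinPMF 𝓧) (dec : 𝓨 → FinPMF (Fin M)) : ℝ :=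
  ∑ m : Fin M, ∑ s : 𝓢, ∑ x : 𝓧, ∑ y : 𝓨,
    (1 / (M : ℝ)) * qS.p s * (enc m s).p x * (W x s).p y * (1 - (dec y).p m)

namespace GPaux

lemma ind_pos {P : Prop} (h : P) : ind P = 1 := by simp [ind, h]
lemma ind_neg {P : Prop} (h : ¬ P) : ind P = 0 := by simp [ind, h]
lemma ind_nonneg (P : Prop) : 0 ≤ ind P := by
  classical by_cases h : P <;> simp [ind, h]
lemma ind_le_one (P : Prop) : ind P ≤ 1 := by
  classical by_cases h : P <;> simp [ind, h]

lemma sum_ind_mul {α : Type*} [Fintype α] (a : α) (g : α → ℝ) :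
    ∑ x, ind (a = x) * g x = g a := by
  classical
  rw [Finset.sum_eq_single a]
  · rw [ind_pos rfl, one_mul]
  · intro b _ hb
    rw [ind_neg fun h => hb h.symm, zero_mul]
  · simp

lemma sum_ind_mul' {α : Type*} [Fintype α] (a : α) (g : α → ℝ) :
    ∑ x, ind (x = a) * g x = g a := by
  classical
  rw [Finset.sum_eq_single a]
  · rw [ind_pos rfl, one_mul]
  · intro b _ hb
    rw [ind_neg hb, zero_mul]
  · simp

lemma sum_ind_eq_one {α : Type*} [Fintype α] (a : α) : ∑ x, ind (x = a) = 1 := by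
  have := sum_ind_mul' a (fun _ => (1:ℝ))
  simpa using this

/-- Telescoping identity for "first acceptance" probabilities. -/
lemma telescope (b : ℕ → ℝ) (n : ℕ) :
    ∑ j ∈ Finset.range n, (∏ k ∈ Finset.range j, (1 - b k)) * b j
      = 1 - ∏ k ∈ Finset.range n, (1 - b k) := by
  induction n with
  | zero => simp
  | succ n ih => rw [Finset.sum_range_succ, Finset.prod_range_succ, ih]; ring

/-- Expectation over an i.i.d. finite product of a product-form integrand. -/
lemma master {ι B : Type*} [Fintype ι] [DecidableEq ι] [Fintype B] (g : ι → B → ℝ) :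
    ∑ r : ι → B, ∏ i, g i (r i) = ∏ i, ∑ b, g i b := by
  rw [Finset.prod_univ_sum, Fintype.piFinset_univ]

section exp
variable {ι B : Type*} [Fintype ι] [DecidableEq ι] [Fintype B]
variable {w : B → ℝ} (hw1 : ∑ b, w b = 1)

include hw1

lemma exp_one (i₁ : ι) (h₁ : B → ℝ) :
    ∑ r : ι → B, (∏ i, w (r i)) * h₁ (r i₁) = ∑ b, w b * h₁ b := by
  classical
  set g : ι → B → ℝ := fun i b => w b * (if i₁ = i then h₁ b else 1) with hg
  have h1 : ∀ r : ι → B, (∏ i, w (r i)) * h₁ (r i₁) = ∏ i, g i (r i) := by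
    intro r
    simp only [hg]
    rw [Finset.prod_mul_distrib, Finset.prod_ite_eq]
    simp
  have h2 : ∀ i : ι, (∑ b, g i b) = (if i₁ = i then ∑ b, w b * h₁ b else 1) := by
    intro i
    by_cases h : i₁ = i <;> simp [hg, h, hw1]
  rw [Finset.sum_congr rfl fun r _ => h1 r, master g,
    Finset.prod_congr rfl fun i _ => h2 i, Finset.prod_ite_eq]
  simp

lemma exp_two {i₁ i₂ : ι} (hne : i₁ ≠ i₂) (h₁ h₂ : B → ℝ) :
    ∑ r : ι → B, (∏ i, w (r i)) * (h₁ (r i₁) * h₂ (r i₂))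
      = (∑ b, w b * h₁ b) * (∑ b, w b * h₂ b) := by
  classical
  set g : ι → B → ℝ := fun i b =>
    w b * (if i₁ = i then h₁ b else 1) * (if i₂ = i then h₂ b else 1) with hg
  have h1 : ∀ r : ι → B, (∏ i, w (r i)) * (h₁ (r i₁) * h₂ (r i₂)) = ∏ i, g i (r i) := by
    intro r
    simp only [hg]
    rw [Finset.prod_mul_distrib, Finset.prod_mul_distrib, Finset.prod_ite_eq,
      Finset.prod_ite_eq]
    simp; ring
  have h2 : ∀ i : ι, (∑ b, g i b)
      = (if i₁ = i then ∑ b, w b * h₁ b else 1) * (if i₂ = i then ∑ b, w b * h₂ b else 1) := by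
    intro i
    by_cases h : i₁ = i
    · have h' : ¬ (i₂ = i) := fun hh => hne (h.trans hh.symm)
      simp [hg, h, h']
    · by_cases h' : i₂ = i <;> simp [hg, h, h', hw1]
  rw [Finset.sum_congr rfl fun r _ => h1 r, master g,
    Finset.prod_congr rfl fun i _ => h2 i, Finset.prod_mul_distrib,
    Finset.prod_ite_eq, Finset.prod_ite_eq]
  simp

end exp

section expB
variable {B : Type*} [Fintype B]
variable {w : B → ℝ} (hw1 : ∑ b, w b = 1)

lemma exp_all (n : ℕ) (A : B → ℝ) :
    ∑ r : Fin n → B, (∏ i, w (r i)) * (∏ i, A (r i)) = (∑ b, w b * A b) ^ n := by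
  have h1 : ∀ r : Fin n → B, (∏ i, w (r i)) * (∏ i, A (r i))
      = ∏ i, (fun (_ : Fin n) (b : B) => w b * A b) i (r i) := by
    intro r; rw [← Finset.prod_mul_distrib]
  rw [Finset.sum_congr rfl fun r _ => h1 r, master (fun (_ : Fin n) (b : B) => w b * A b)]
  simp [Finset.prod_const]

include hw1 in
lemma exp_prefix (n : ℕ) (A h : B → ℝ) (j : Fin n) :
    ∑ r : Fin n → B, (∏ i, w (r i)) *
        ((∏ i : Fin n, (if (i : ℕ) < (j : ℕ) then A (r i) else 1)) * h (r j))
      = (∑ b, w b * A b) ^ (j : ℕ) * (∑ b, w b * h b) := by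
  classical
  set g : Fin n → B → ℝ := fun i b =>
    w b * (if (i : ℕ) < (j : ℕ) then A b else 1) * (if j = i then h b else 1) with hg
  have h1 : ∀ r : Fin n → B, (∏ i, w (r i)) *
      ((∏ i : Fin n, (if (i : ℕ) < (j : ℕ) then A (r i) else 1)) * h (r j))
      = ∏ i, g i (r i) := by
    intro r
    simp only [hg]
    rw [Finset.prod_mul_distrib, Finset.prod_mul_distrib, Finset.prod_ite_eq]
    simp [mul_assoc]
  have h2 : ∀ i : Fin n, (∑ b, g i b)
      = (if (i : ℕ) < (j : ℕ) then (∑ b, w b * A b) else 1)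
        * (if j = i then (∑ b, w b * h b) else 1) := by
    intro i
    by_cases hlt : (i : ℕ) < (j : ℕ)
    · have hne : ¬ (j = i) := by
        intro hji; rw [hji] at hlt; exact lt_irrefl _ hlt
      simp only [hg, if_pos hlt, if_neg hne, mul_one]
    · by_cases hji : j = i
      · simp only [hg, if_neg hlt, if_pos hji, mul_one, one_mul]
      · simp only [hg, if_neg hlt, if_neg hji, mul_one, one_mul]
        simpa using hw1
  rw [Finset.sum_congr rfl fun r _ => h1 r, master g,
    Finset.prod_congr rfl fun i _ => h2 i, Finset.prod_mul_distrib, Finset.prod_ite_eq]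
  have h3 : (∏ i : Fin n, (if (i : ℕ) < (j : ℕ) then (∑ b, w b * A b) else 1))
      = (∑ b, w b * A b) ^ (j : ℕ) := by
    rw [Fin.prod_univ_eq_prod_range (fun k => if k < (j : ℕ) then (∑ b, w b * A b) else 1) n,
      ← Finset.prod_range_mul_prod_Ico _ (le_of_lt j.isLt)]
    have e1 : ∏ k ∈ Finset.range (j : ℕ), (if k < (j : ℕ) then (∑ b, w b * A b) else 1)
        = (∑ b, w b * A b) ^ (j : ℕ) := by
      rw [Finset.prod_congr rfl fun k hk => if_pos (Finset.mem_range.mp hk)]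
      simp [Finset.prod_const]
    have e2 : ∏ k ∈ Finset.Ico (j : ℕ) n, (if k < (j : ℕ) then (∑ b, w b * A b) else 1) = 1 := by
      apply Finset.prod_eq_one
      intro k hk
      exact if_neg (not_lt.mpr (Finset.mem_Ico.mp hk).1)
    rw [e1, e2, mul_one]
  rw [h3]
  simp

end expB

lemma key_ineq (n : ℕ) (hn : 0 < n) (c a b : ℝ) (hc : 1 ≤ c) (ha0 : 0 ≤ a) (ha1 : a ≤ 1)
    (hb0 : 0 ≤ b) (hba : b ≤ a) (hp1 : c * a / n ≤ 1) :
    (1 - c * a / n) ^ n + (∑ j ∈ Finset.range n, (1 - c * a / n) ^ j) * (c * b / n)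
      ≤ 1 - a + b + Real.exp (-c) := by
  have hnR : (0:ℝ) < n := by exact_mod_cast hn
  set p : ℝ := c * a / n with hp
  have hp0 : 0 ≤ p := by positivity
  rcases eq_or_lt_of_le ha0 with ha | ha
  · have hb : b = 0 := le_antisymm (by linarith) hb0
    have hpz : p = 0 := by simp [hp, ← ha]
    rw [hpz, hb, ← ha]
    simp [Real.exp_nonneg]
  · -- a > 0
    have geom : ∑ j ∈ Finset.range n, (1 - p) ^ j * p = 1 - (1 - p) ^ n := by
      have h := telescope (fun _ => p) n
      simp only [Finset.prod_const, Finset.card_range] at h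
      exact h
    have hsec : (∑ j ∈ Finset.range n, (1 - p) ^ j) * (c * b / n)
        = (1 - (1 - p) ^ n) * (b / a) := by
      have hcb : c * b / n = p * (b / a) := by
        field_simp [hp]
        rw [hp]; field_simp [hnR.ne']
      rw [hcb, ← mul_assoc, Finset.sum_mul, geom]
    rw [hsec]
    set F : ℝ := (1 - p) ^ n with hF
    have hF0 : 0 ≤ F := pow_nonneg (by linarith) n
    have hF1 : F ≤ 1 := pow_le_one₀ (by linarith) (by linarith)
    have hFe : F ≤ Real.exp (-(c * a)) := by
      have h1 : 1 - p ≤ Real.exp (-p) := by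
        have := Real.add_one_le_exp (-p)
        linarith
      have h2 : F ≤ Real.exp (-p) ^ n := pow_le_pow_left₀ (by linarith) h1 n
      have h3 : Real.exp (-p) ^ n = Real.exp (-(c * a)) := by
        rw [← Real.exp_nat_mul]
        congr 1
        field_simp [hp]
        rw [hp]; field_simp [hnR.ne']
      linarith [h2, h3.le]
    have hconv : Real.exp (-(c * a)) ≤ 1 - a + a * Real.exp (-c) := by
      have := convexOn_exp.2 (Set.mem_univ (0:ℝ)) (Set.mem_univ (-c))
        (by linarith : (0:ℝ) ≤ 1 - a) ha0 (by ring : (1 - a) + a = 1)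
      simp only [smul_eq_mul, mul_zero, mul_neg, Real.exp_zero, mul_one, zero_add] at this
      linarith [this, show Real.exp (-(c * a)) = Real.exp (-(a * c)) by ring_nf]
    set t : ℝ := b / a with ht
    have ht0 : 0 ≤ t := div_nonneg hb0 (le_of_lt ha)
    have ht1 : t ≤ 1 := (div_le_one ha).mpr hba
    have hat : a * t = b := by rw [ht]; field_simp [ha.ne']
    have he0 : 0 ≤ Real.exp (-c) := (Real.exp_pos _).le
    have hE : F ≤ 1 - a + a * Real.exp (-c) := le_trans hFe hconv
    have step1 : F * (1 - t) ≤ (1 - a + a * Real.exp (-c)) * (1 - t) :=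
      mul_le_mul_of_nonneg_right hE (by linarith)
    have step2 : a * Real.exp (-c) * (1 - t) ≤ Real.exp (-c) := by
      nlinarith [mul_nonneg ha0 he0]
    nlinarith [step1, step2, hat]

lemma exp_le_rpow {γ : ℝ} : Real.exp (-(2:ℝ) ^ γ) ≤ (2:ℝ) ^ (-γ) := by
  have h2 : (2:ℝ) ^ (-γ) = Real.exp (Real.log 2 * (-γ)) := by
    rw [Real.rpow_def_of_pos (by norm_num : (0:ℝ) < 2)]
  rw [h2, Real.exp_le_exp]
  have h3 : (2:ℝ) ^ γ = Real.exp (Real.log 2 * γ) := by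
    rw [Real.rpow_def_of_pos (by norm_num : (0:ℝ) < 2)]
  have h4 : Real.log 2 * γ + 1 ≤ (2:ℝ) ^ γ := by
    rw [h3]; exact Real.add_one_le_exp _
  nlinarith [Real.log_pos (by norm_num : (1:ℝ) < 2)]

lemma one_le_two_rpow {γ : ℝ} (hγ : 0 ≤ γ) : (1:ℝ) ≤ (2:ℝ) ^ γ := by
  have := (Real.rpow_le_rpow_left_iff (by norm_num : (1:ℝ) < 2)).mpr hγ
  simpa using this

lemma FinPMF_nonempty {α : Type} [Fintype α] (p : FinPMF α) : Nonempty α := by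
  by_contra h
  have h1 := p.sum_eq_one
  haveI : IsEmpty α := not_nonempty_iff.mp h
  rw [Finset.univ_eq_empty] at h1
  simp at h1

end GPaux

/-- Bundled context for the one-shot Gelfand–Pinsker construction. -/
structure GPC (𝓢 𝓤 𝓧 𝓨 : Type) [Fintype 𝓢] [Fintype 𝓤] [Fintype 𝓧] [Fintype 𝓨] where
  qS : FinPMF 𝓢
  qU : 𝓢 → FinPMF 𝓤
  W : 𝓧 → 𝓢 → FinPMF 𝓨
  f : 𝓤 → 𝓢 → 𝓧
  M : ℕ
  J : ℕ
  γ : ℝ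
  hM : 0 < M
  hJ : 0 < J
  hγ : 0 < γ

namespace GPC

open GPaux

variable {𝓢 𝓤 𝓧 𝓨 : Type} [Fintype 𝓢] [Fintype 𝓤] [Fintype 𝓧] [Fintype 𝓨]
variable (c : GPC 𝓢 𝓤 𝓧 𝓨)

/-- Marginal pmf of `U`. -/
noncomputable def PU (u : 𝓤) : ℝ := ∑ s, c.qS.p s * (c.qU s).p u

lemma PU_nonneg (u : 𝓤) : 0 ≤ c.PU u :=
  Finset.sum_nonneg fun s _ => mul_nonneg (c.qS.nonneg s) ((c.qU s).nonneg u)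

lemma PU_sum : ∑ u, c.PU u = 1 := by
  unfold PU
  rw [Finset.sum_comm]
  have h : ∀ s : 𝓢, ∑ u, c.qS.p s * (c.qU s).p u = c.qS.p s := by
    intro s
    rw [← Finset.mul_sum, (c.qU s).sum_eq_one, mul_one]
  rw [Finset.sum_congr rfl fun s _ => h s, c.qS.sum_eq_one]

/-- Covering-good set: `log J - i(U;S) ≥ γ`. -/
def G (u : 𝓤) (s : 𝓢) : Prop := c.γ ≤ Real.logb 2 (c.J : ℝ) - iUS c.qS c.qU u s

/-- Decoding threshold event: `i(U;Y) - log (M J) ≥ γ`. -/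
def Pass (u : 𝓤) (y : 𝓨) : Prop :=
  c.γ ≤ iUY c.qS c.qU c.W c.f u y - Real.logb 2 ((c.M : ℝ) * (c.J : ℝ))

/-- Acceptance probability of the rejection-sampling encoder. -/
noncomputable def acc (u : 𝓤) (s : 𝓢) : ℝ :=
  ind (c.G u s) * min 1 ((2:ℝ) ^ c.γ * (c.qU s).p u / ((c.J : ℝ) * c.PU u))

lemma acc_arg_nonneg (u : 𝓤) (s : 𝓢) :
    0 ≤ (2:ℝ) ^ c.γ * (c.qU s).p u / ((c.J : ℝ) * c.PU u) :=
  div_nonneg (mul_nonneg (Real.rpow_nonneg (by norm_num) _) ((c.qU s).nonneg u))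
    (mul_nonneg (Nat.cast_nonneg _) (c.PU_nonneg u))

lemma acc_nonneg (u : 𝓤) (s : 𝓢) : 0 ≤ c.acc u s := by
  apply mul_nonneg (ind_nonneg _)
  exact le_min (by norm_num) (c.acc_arg_nonneg u s)

lemma acc_le_one (u : 𝓤) (s : 𝓢) : c.acc u s ≤ 1 := by
  calc c.acc u s ≤ 1 * 1 :=
        mul_le_mul (ind_le_one _) (min_le_left _ _)
          (le_min (by norm_num) (c.acc_arg_nonneg u s)) (by norm_num)
    _ = 1 := one_mul 1

noncomputable def accN (r : Fin c.J → 𝓤) (s : 𝓢) (k : ℕ) : ℝ :=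
  if h : k < c.J then c.acc (r ⟨k, h⟩) s else 0

lemma accN_coe (r : Fin c.J → 𝓤) (s : 𝓢) (j : Fin c.J) :
    c.accN r s (j : ℕ) = c.acc (r j) s := by
  rw [accN, dif_pos j.isLt]

lemma accN_nonneg (r : Fin c.J → 𝓤) (s : 𝓢) (k : ℕ) : 0 ≤ c.accN r s k := by
  rw [accN]
  split
  · exact c.acc_nonneg _ _
  · exact le_refl 0

lemma accN_le_one (r : Fin c.J → 𝓤) (s : 𝓢) (k : ℕ) : c.accN r s k ≤ 1 := by
  rw [accN]
  split
  · exact c.acc_le_one _ _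
  · norm_num

/-- Failure probability of the encoder for a given codebook row. -/
noncomputable def pfail (r : Fin c.J → 𝓤) (s : 𝓢) : ℝ :=
  ∏ k ∈ Finset.range c.J, (1 - c.accN r s k)

/-- Probability that the encoder settles on index `j`. -/
noncomputable def w1 (r : Fin c.J → 𝓤) (s : 𝓢) (j : Fin c.J) : ℝ :=
  (∏ k ∈ Finset.range (j : ℕ), (1 - c.accN r s k)) * c.acc (r j) s

lemma pfail_nonneg (r : Fin c.J → 𝓤) (s : 𝓢) : 0 ≤ c.pfail r s :=
  Finset.prod_nonneg fun k _ => by linarith [c.accN_le_one r s k]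

lemma w1_nonneg (r : Fin c.J → 𝓤) (s : 𝓢) (j : Fin c.J) : 0 ≤ c.w1 r s j :=
  mul_nonneg (Finset.prod_nonneg fun k _ => by linarith [c.accN_le_one r s k])
    (c.acc_nonneg _ _)

lemma w1_sum (r : Fin c.J → 𝓤) (s : 𝓢) : ∑ j, c.w1 r s j = 1 - c.pfail r s := by
  have h : ∀ j : Fin c.J, c.w1 r s j
      = (∏ k ∈ Finset.range (j:ℕ), (1 - c.accN r s k)) * c.accN r s (j:ℕ) := by
    intro j
    rw [w1, accN_coe]
  rw [Finset.sum_congr rfl fun j _ => h j,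
    Fin.sum_univ_eq_sum_range
      (fun j => (∏ k ∈ Finset.range j, (1 - c.accN r s k)) * c.accN r s j) c.J,
    telescope, pfail]

include c in
lemma nonempty_S : Nonempty 𝓢 := FinPMF_nonempty c.qS

include c in
lemma nonempty_U : Nonempty 𝓤 := FinPMF_nonempty (c.qU (Classical.choice c.nonempty_S))

/-- A default channel input. -/
noncomputable def x0 : 𝓧 :=
  c.f (Classical.choice c.nonempty_U) (Classical.choice c.nonempty_S)

/-- The pmf on channel inputs generated by the encoder, given codebook `C`,
message `m` and state `s`. -/
noncomputable def encp (C : Fin c.M → Fin c.J → 𝓤) (m : Fin c.M) (s : 𝓢) (x : 𝓧) : ℝ :=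
  (∑ j, c.w1 (C m) s j * ind (c.f (C m j) s = x)) + c.pfail (C m) s * ind (x = c.x0)

lemma encp_nonneg (C : Fin c.M → Fin c.J → 𝓤) (m : Fin c.M) (s : 𝓢) (x : 𝓧) :
    0 ≤ c.encp C m s x :=
  add_nonneg
    (Finset.sum_nonneg fun j _ => mul_nonneg (c.w1_nonneg _ _ _) (ind_nonneg _))
    (mul_nonneg (c.pfail_nonneg _ _) (ind_nonneg _))

lemma encp_sum (C : Fin c.M → Fin c.J → 𝓤) (m : Fin c.M) (s : 𝓢) :
    ∑ x, c.encp C m s x = 1 := by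
  unfold encp
  rw [Finset.sum_add_distrib, Finset.sum_comm]
  have h1 : ∀ j : Fin c.J, ∑ x, c.w1 (C m) s j * ind (c.f (C m j) s = x)
      = c.w1 (C m) s j := by
    intro j
    rw [← Finset.mul_sum]
    have := sum_ind_mul (c.f (C m j) s) (fun _ : 𝓧 => (1:ℝ))
    simp only [mul_one] at this
    rw [this, mul_one]
  have h2 : ∑ x, c.pfail (C m) s * ind (x = c.x0) = c.pfail (C m) s := by
    rw [← Finset.mul_sum, sum_ind_eq_one, mul_one]
  rw [Finset.sum_congr rfl fun j _ => h1 j, h2, c.w1_sum]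
  ring

/-- The encoder as a stochastic map. -/
noncomputable def enc (C : Fin c.M → Fin c.J → 𝓤) (m : Fin c.M) (s : 𝓢) : FinPMF 𝓧 :=
  ⟨c.encp C m s, c.encp_nonneg C m s, c.encp_sum C m s⟩

/-- Threshold decoder output. -/
noncomputable def decOut (C : Fin c.M → Fin c.J → 𝓤) (y : 𝓨) : Fin c.M := by
  classical
  exact if h : ∃ m, ∃ j, c.Pass (C m j) y then h.choose else ⟨0, c.hM⟩

/-- The decoder as a stochastic (here deterministic) map. -/
noncomputable def dec (C : Fin c.M → Fin c.J → 𝓤) (y : 𝓨) : FinPMF (Fin c.M) :=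
  ⟨fun m => ind (m = c.decOut C y), fun m => ind_nonneg _, sum_ind_eq_one _⟩

lemma decOut_eq {C : Fin c.M → Fin c.J → 𝓤} {y : 𝓨} {m : Fin c.M}
    (h1 : ∃ j, c.Pass (C m j) y)
    (h2 : ∀ m', m' ≠ m → ¬ ∃ j', c.Pass (C m' j') y) :
    c.decOut C y = m := by
  classical
  have hex : ∃ m', ∃ j, c.Pass (C m' j) y := ⟨m, h1⟩
  rw [decOut, dif_pos hex]
  by_contra hne
  exact h2 _ hne hex.choose_spec

/-- Codebook-row weight. -/
noncomputable def wR (r : Fin c.J → 𝓤) : ℝ := ∏ j, c.PU (r j)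

/-- Codebook weight. -/
noncomputable def wCb (C : Fin c.M → Fin c.J → 𝓤) : ℝ := ∏ m, c.wR (C m)

lemma wR_nonneg (r : Fin c.J → 𝓤) : 0 ≤ c.wR r :=
  Finset.prod_nonneg fun j _ => c.PU_nonneg _

lemma wCb_nonneg (C : Fin c.M → Fin c.J → 𝓤) : 0 ≤ c.wCb C :=
  Finset.prod_nonneg fun m _ => c.wR_nonneg _

lemma wR_sum : ∑ r : Fin c.J → 𝓤, c.wR r = 1 := by
  rw [show (fun r : Fin c.J → 𝓤 => c.wR r) = fun r => ∏ j, (fun (_ : Fin c.J) u => c.PU u) j (r j) from rfl,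
    master (fun (_ : Fin c.J) u => c.PU u)]
  simp [c.PU_sum]

lemma wCb_sum : ∑ C : Fin c.M → Fin c.J → 𝓤, c.wCb C = 1 := by
  rw [show (fun C : Fin c.M → Fin c.J → 𝓤 => c.wCb C)
      = fun C => ∏ m, (fun (_ : Fin c.M) r => c.wR r) m (C m) from rfl,
    master (fun (_ : Fin c.M) (r : Fin c.J → 𝓤) => c.wR r)]
  simp [c.wR_sum]

/-- Per-attempt acceptance probability. -/
noncomputable def pbar (s : 𝓢) : ℝ := ∑ u, c.PU u * c.acc u s

lemma pbar_nonneg (s : 𝓢) : 0 ≤ c.pbar s :=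
  Finset.sum_nonneg fun u _ => mul_nonneg (c.PU_nonneg u) (c.acc_nonneg u s)

lemma pbar_le_one (s : 𝓢) : c.pbar s ≤ 1 := by
  calc c.pbar s ≤ ∑ u, c.PU u :=
        Finset.sum_le_sum fun u _ =>
          mul_le_of_le_one_right (c.PU_nonneg u) (c.acc_le_one u s)
    _ = 1 := c.PU_sum

/-- Probability (over the channel) that the chosen codeword fails the decoding threshold. -/
noncomputable def beta (u : 𝓤) (s : 𝓢) : ℝ :=
  ∑ y, (c.W (c.f u s) s).p y * ind (¬ c.Pass u y)

lemma beta_nonneg (u : 𝓤) (s : 𝓢) : 0 ≤ c.beta u s :=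
  Finset.sum_nonneg fun y _ => mul_nonneg ((c.W _ s).nonneg y) (ind_nonneg _)

lemma beta_le_one (u : 𝓤) (s : 𝓢) : c.beta u s ≤ 1 := by
  calc c.beta u s ≤ ∑ y, (c.W (c.f u s) s).p y :=
        Finset.sum_le_sum fun y _ =>
          mul_le_of_le_one_right ((c.W _ s).nonneg y) (ind_le_one _)
    _ = 1 := (c.W _ s).sum_eq_one

noncomputable def aa (s : 𝓢) : ℝ := ∑ u, (c.qU s).p u * ind (c.G u s)

noncomputable def bb (s : 𝓢) : ℝ := ∑ u, (c.qU s).p u * ind (c.G u s) * c.beta u s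

lemma aa_nonneg (s : 𝓢) : 0 ≤ c.aa s :=
  Finset.sum_nonneg fun u _ => mul_nonneg ((c.qU s).nonneg u) (ind_nonneg _)

lemma aa_le_one (s : 𝓢) : c.aa s ≤ 1 := by
  calc c.aa s ≤ ∑ u, (c.qU s).p u :=
        Finset.sum_le_sum fun u _ =>
          mul_le_of_le_one_right ((c.qU s).nonneg u) (ind_le_one _)
    _ = 1 := (c.qU s).sum_eq_one

lemma bb_nonneg (s : 𝓢) : 0 ≤ c.bb s :=
  Finset.sum_nonneg fun u _ =>
    mul_nonneg (mul_nonneg ((c.qU s).nonneg u) (ind_nonneg _)) (c.beta_nonneg u s)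

lemma bb_le_aa (s : 𝓢) : c.bb s ≤ c.aa s :=
  Finset.sum_le_sum fun u _ =>
    mul_le_of_le_one_right (mul_nonneg ((c.qU s).nonneg u) (ind_nonneg _))
      (c.beta_le_one u s)

end GPC

namespace GPC

open GPaux

variable {𝓢 𝓤 𝓧 𝓨 : Type} [Fintype 𝓢] [Fintype 𝓤] [Fintype 𝓧] [Fintype 𝓨]
variable (c : GPC 𝓢 𝓤 𝓧 𝓨)

lemma two_pos' : (0:ℝ) < 2 := by norm_num

lemma rpow_pos (t : ℝ) : (0:ℝ) < (2:ℝ) ^ t := Real.rpow_pos_of_pos (by norm_num) t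

lemma rpow_mul_rpow_neg : (2:ℝ) ^ c.γ * (2:ℝ) ^ (-c.γ) = 1 := by
  rw [← Real.rpow_add (by norm_num : (0:ℝ) < 2)]
  simp

/-- Key identity: for states of positive probability the per-draw acceptance weight
is exactly `2^γ q(u|s) 1[G]/J`. -/
lemma acc_mul {s : 𝓢} (hs : 0 < c.qS.p s) (u : 𝓤) :
    c.PU u * c.acc u s = (2:ℝ) ^ c.γ * ((c.qU s).p u * ind (c.G u s)) / (c.J : ℝ) := by
  have hJR : (0:ℝ) < (c.J : ℝ) := by exact_mod_cast c.hJ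
  by_cases hG : c.G u s
  · by_cases hqu : (c.qU s).p u = 0
    · rw [acc, ind_pos hG, hqu]
      simp
    · have hqu' : 0 < (c.qU s).p u := lt_of_le_of_ne ((c.qU s).nonneg u) (Ne.symm hqu)
      have hPU : 0 < c.PU u := by
        have h1 : c.qS.p s * (c.qU s).p u ≤ c.PU u := by
          apply Finset.single_le_sum (f := fun s' => c.qS.p s' * (c.qU s').p u)
            (fun s' _ => mul_nonneg (c.qS.nonneg s') ((c.qU s').nonneg u))
            (Finset.mem_univ s)
        exact lt_of_lt_of_le (mul_pos hs hqu') h1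
      -- the information-density bound
      have harg : (c.qS.p s * (c.qU s).p u) / ((∑ s', c.qS.p s' * (c.qU s').p u) * c.qS.p s)
          = (c.qU s).p u / c.PU u := by
        have h2 : (∑ s', c.qS.p s' * (c.qU s').p u) = c.PU u := rfl
        have hs' : c.qS.p s ≠ 0 := ne_of_gt hs
        have hPU' : c.PU u ≠ 0 := ne_of_gt hPU
        rw [h2]
        field_simp
      have hpos : 0 < (c.qU s).p u / c.PU u := div_pos hqu' hPU
      have hlog : Real.logb 2 ((c.qU s).p u / c.PU u)
          ≤ Real.logb 2 (c.J : ℝ) - c.γ := by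
        have := hG
        rw [G, iUS, harg] at this
        linarith
      have hratio : (c.qU s).p u / c.PU u ≤ (c.J : ℝ) * (2:ℝ) ^ (-c.γ) := by
        have h3 : (c.qU s).p u / c.PU u
            = (2:ℝ) ^ Real.logb 2 ((c.qU s).p u / c.PU u) :=
          (Real.rpow_logb (by norm_num) (by norm_num) hpos).symm
        have h4 : (2:ℝ) ^ Real.logb 2 ((c.qU s).p u / c.PU u)
            ≤ (2:ℝ) ^ (Real.logb 2 (c.J : ℝ) - c.γ) :=
          (Real.rpow_le_rpow_left_iff (by norm_num : (1:ℝ) < 2)).mpr hlog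
        have h5 : (2:ℝ) ^ (Real.logb 2 (c.J : ℝ) - c.γ) = (c.J : ℝ) * (2:ℝ) ^ (-c.γ) := by
          rw [sub_eq_add_neg, Real.rpow_add (by norm_num : (0:ℝ) < 2),
            Real.rpow_logb (by norm_num) (by norm_num) hJR]
        rw [h3] at *
        linarith [h4, h5.le]
      have hminle : (2:ℝ) ^ c.γ * (c.qU s).p u / ((c.J : ℝ) * c.PU u) ≤ 1 := by
        rw [div_le_one (mul_pos hJR hPU)]
        have h6 : (c.qU s).p u ≤ (c.J : ℝ) * (2:ℝ) ^ (-c.γ) * c.PU u :=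
          (div_le_iff₀ hPU).mp hratio
        have h7 := mul_le_mul_of_nonneg_left h6 (le_of_lt (rpow_pos c.γ))
        calc (2:ℝ) ^ c.γ * (c.qU s).p u
            ≤ (2:ℝ) ^ c.γ * ((c.J : ℝ) * (2:ℝ) ^ (-c.γ) * c.PU u) := h7
          _ = ((2:ℝ) ^ c.γ * (2:ℝ) ^ (-c.γ)) * ((c.J : ℝ) * c.PU u) := by ring
          _ = (c.J : ℝ) * c.PU u := by rw [c.rpow_mul_rpow_neg, one_mul]
      rw [acc, ind_pos hG, one_mul, min_eq_right hminle]
      have hPU' : c.PU u ≠ 0 := ne_of_gt hPU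
      field_simp
  · rw [acc, ind_neg hG]
    simp

lemma pbar_eq {s : 𝓢} (hs : 0 < c.qS.p s) :
    c.pbar s = (2:ℝ) ^ c.γ * c.aa s / (c.J : ℝ) := by
  rw [pbar, Finset.sum_congr rfl fun u _ => c.acc_mul hs u, aa, ← Finset.sum_div,
    ← Finset.mul_sum]

lemma kappa_eq {s : 𝓢} (hs : 0 < c.qS.p s) :
    ∑ u, c.PU u * (c.acc u s * c.beta u s) = (2:ℝ) ^ c.γ * c.bb s / (c.J : ℝ) := by
  have h : ∀ u : 𝓤, c.PU u * (c.acc u s * c.beta u s)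
      = ((2:ℝ) ^ c.γ * ((c.qU s).p u * ind (c.G u s)) / (c.J : ℝ)) * c.beta u s := by
    intro u
    rw [← mul_assoc, c.acc_mul hs u]
  rw [Finset.sum_congr rfl fun u _ => h u, bb]
  rw [Finset.mul_sum, Finset.sum_div]
  apply Finset.sum_congr rfl
  intro u _
  ring

noncomputable def quy (u : 𝓤) (y : 𝓨) : ℝ := ∑ s, qUSY c.qS c.qU c.W c.f u s y

noncomputable def PY (y : 𝓨) : ℝ := ∑ u, ∑ s, qUSY c.qS c.qU c.W c.f u s y

lemma qUSY_nonneg (u : 𝓤) (s : 𝓢) (y : 𝓨) : 0 ≤ qUSY c.qS c.qU c.W c.f u s y :=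
  mul_nonneg (mul_nonneg (c.qS.nonneg s) ((c.qU s).nonneg u)) ((c.W _ s).nonneg y)

lemma quy_nonneg (u : 𝓤) (y : 𝓨) : 0 ≤ c.quy u y :=
  Finset.sum_nonneg fun s _ => c.qUSY_nonneg u s y

lemma PY_nonneg (y : 𝓨) : 0 ≤ c.PY y :=
  Finset.sum_nonneg fun u _ => c.quy_nonneg u y

lemma quy_le_PY (u : 𝓤) (y : 𝓨) : c.quy u y ≤ c.PY y :=
  Finset.single_le_sum (f := fun u' => c.quy u' y) (fun u' _ => c.quy_nonneg u' y)
    (Finset.mem_univ u)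

/-- Packing bound: for every `y`, the chance that an independent codeword passes the
threshold is at most `2^{-γ}/(M J)`. -/
lemma MJ_pos : (0:ℝ) < (c.M : ℝ) * (c.J : ℝ) :=
  mul_pos (by exact_mod_cast c.hM) (by exact_mod_cast c.hJ)

lemma pass_key {u : 𝓤} {y : 𝓨} (h : c.Pass u y) :
    0 < c.PY y ∧
      c.PU u * (((2:ℝ) ^ c.γ * ((c.M : ℝ) * (c.J : ℝ))) * c.PY y) ≤ c.quy u y := by
  have hMJ := c.MJ_pos
  have hlogMJ : 0 ≤ Real.logb 2 ((c.M : ℝ) * (c.J : ℝ)) := by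
    apply Real.logb_nonneg (by norm_num)
    have h1 : (1:ℝ) ≤ (c.M : ℝ) := by exact_mod_cast c.hM
    have h2 : (1:ℝ) ≤ (c.J : ℝ) := by exact_mod_cast c.hJ
    nlinarith
  have harg : iUY c.qS c.qU c.W c.f u y
      = Real.logb 2 (c.quy u y / (c.PU u * c.PY y)) := rfl
  have hlog : c.γ + Real.logb 2 ((c.M : ℝ) * (c.J : ℝ))
      ≤ Real.logb 2 (c.quy u y / (c.PU u * c.PY y)) := by
    have := h
    rw [Pass, harg] at this
    linarith
  have hρ0 : 0 ≤ c.quy u y / (c.PU u * c.PY y) :=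
    div_nonneg (c.quy_nonneg u y) (mul_nonneg (c.PU_nonneg u) (c.PY_nonneg y))
  have hρ : 0 < c.quy u y / (c.PU u * c.PY y) := by
    rcases hρ0.lt_or_eq with h1 | h1
    · exact h1
    · exfalso
      rw [← h1, Real.logb_zero] at hlog
      linarith [c.hγ]
  have hden : 0 < c.PU u * c.PY y := by
    rcases (mul_nonneg (c.PU_nonneg u) (c.PY_nonneg y)).lt_or_eq with h1 | h1
    · exact h1
    · exfalso
      rw [← h1, div_zero] at hρ
      exact lt_irrefl _ hρ
  have hPY : 0 < c.PY y := by
    rcases (c.PY_nonneg y).lt_or_eq with h1 | h1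
    · exact h1
    · exfalso
      rw [← h1, mul_zero] at hden
      exact lt_irrefl _ hden
  refine ⟨hPY, ?_⟩
  have hbound : (2:ℝ) ^ c.γ * ((c.M : ℝ) * (c.J : ℝ))
      ≤ c.quy u y / (c.PU u * c.PY y) := by
    have h3 : c.quy u y / (c.PU u * c.PY y)
        = (2:ℝ) ^ Real.logb 2 (c.quy u y / (c.PU u * c.PY y)) :=
      (Real.rpow_logb (by norm_num) (by norm_num) hρ).symm
    have h4 : (2:ℝ) ^ (c.γ + Real.logb 2 ((c.M : ℝ) * (c.J : ℝ)))
        ≤ (2:ℝ) ^ Real.logb 2 (c.quy u y / (c.PU u * c.PY y)) :=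
      (Real.rpow_le_rpow_left_iff (by norm_num : (1:ℝ) < 2)).mpr hlog
    have h5 : (2:ℝ) ^ (c.γ + Real.logb 2 ((c.M : ℝ) * (c.J : ℝ)))
        = (2:ℝ) ^ c.γ * ((c.M : ℝ) * (c.J : ℝ)) := by
      rw [Real.rpow_add (by norm_num : (0:ℝ) < 2),
        Real.rpow_logb (by norm_num) (by norm_num) hMJ]
    rw [h3]
    linarith [h4, h5.le]
  have h6 := (le_div_iff₀ hden).mp hbound
  calc c.PU u * (((2:ℝ) ^ c.γ * ((c.M : ℝ) * (c.J : ℝ))) * c.PY y)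
      = ((2:ℝ) ^ c.γ * ((c.M : ℝ) * (c.J : ℝ))) * (c.PU u * c.PY y) := by ring
    _ ≤ c.quy u y := h6

/-- Packing bound: for every `y`, the chance that an independent codeword passes the
threshold is at most `2^{-γ}/(M J)`. -/
lemma pass_sum (y : 𝓨) :
    ∑ u, c.PU u * ind (c.Pass u y) ≤ (2:ℝ) ^ (-c.γ) / ((c.M : ℝ) * (c.J : ℝ)) := by
  have hMJ := c.MJ_pos
  have hrhs0 : 0 ≤ (2:ℝ) ^ (-c.γ) / ((c.M : ℝ) * (c.J : ℝ)) :=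
    div_nonneg (le_of_lt (rpow_pos _)) (le_of_lt hMJ)
  by_cases hPYz : c.PY y = 0
  · have hz : ∀ u : 𝓤, c.PU u * ind (c.Pass u y) = 0 := by
      intro u
      by_cases hp : c.Pass u y
      · exfalso
        have := (c.pass_key hp).1
        rw [hPYz] at this
        exact lt_irrefl _ this
      · rw [ind_neg hp, mul_zero]
    rw [Finset.sum_congr rfl fun u _ => hz u]
    simpa using hrhs0
  · have hPY : 0 < c.PY y := lt_of_le_of_ne (c.PY_nonneg y) (Ne.symm hPYz)
    set K : ℝ := ((2:ℝ) ^ c.γ * ((c.M : ℝ) * (c.J : ℝ))) * c.PY y with hK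
    have hKpos : 0 < K := mul_pos (mul_pos (rpow_pos _) hMJ) hPY
    have hper : ∀ u : 𝓤, c.PU u * ind (c.Pass u y) ≤ c.quy u y / K := by
      intro u
      by_cases hp : c.Pass u y
      · rw [ind_pos hp, mul_one, le_div_iff₀ hKpos]
        exact (c.pass_key hp).2
      · rw [ind_neg hp, mul_zero]
        exact div_nonneg (c.quy_nonneg u y) (le_of_lt hKpos)
    calc ∑ u, c.PU u * ind (c.Pass u y) ≤ ∑ u, c.quy u y / K :=
          Finset.sum_le_sum fun u _ => hper u
      _ = c.PY y / K := by rw [← Finset.sum_div]; rfl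
      _ = (2:ℝ) ^ (-c.γ) / ((c.M : ℝ) * (c.J : ℝ)) := by
          rw [hK, Real.rpow_neg (by norm_num : (0:ℝ) ≤ 2)]
          field_simp

end GPC

namespace GPC

open GPaux

variable {𝓢 𝓤 𝓧 𝓨 : Type} [Fintype 𝓢] [Fintype 𝓤] [Fintype 𝓧] [Fintype 𝓨]
variable (c : GPC 𝓢 𝓤 𝓧 𝓨)

/-- Expectation over the random codebook. -/
noncomputable def EC (F : (Fin c.M → Fin c.J → 𝓤) → ℝ) : ℝ := ∑ C, c.wCb C * F C

lemma EC_mono {F G : (Fin c.M → Fin c.J → 𝓤) → ℝ} (h : ∀ C, F C ≤ G C) :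
    c.EC F ≤ c.EC G :=
  Finset.sum_le_sum fun C _ => mul_le_mul_of_nonneg_left (h C) (c.wCb_nonneg C)

lemma EC_sum {α : Type*} (t : Finset α) (F : α → (Fin c.M → Fin c.J → 𝓤) → ℝ) :
    c.EC (fun C => ∑ i ∈ t, F i C) = ∑ i ∈ t, c.EC (F i) := by
  unfold EC
  simp only [Finset.mul_sum]
  exact Finset.sum_comm

lemma sum_PU_one_sub_acc (s : 𝓢) : ∑ u, c.PU u * (1 - c.acc u s) = 1 - c.pbar s := by
  simp only [mul_sub, mul_one]
  rw [Finset.sum_sub_distrib, c.PU_sum, pbar]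

lemma pfail_eq (r : Fin c.J → 𝓤) (s : 𝓢) :
    c.pfail r s = ∏ i : Fin c.J, (1 - c.acc (r i) s) := by
  rw [pfail, ← Fin.prod_univ_eq_prod_range (fun k => 1 - c.accN r s k) c.J]
  exact Finset.prod_congr rfl fun i _ => by rw [accN_coe]

lemma prefix_eq (r : Fin c.J → 𝓤) (s : 𝓢) (j : Fin c.J) :
    (∏ k ∈ Finset.range (j : ℕ), (1 - c.accN r s k))
      = ∏ i : Fin c.J, (if (i : ℕ) < (j : ℕ) then (1 - c.acc (r i) s) else 1) := by
  have h1 : ∀ i : Fin c.J,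
      (if (i : ℕ) < (j : ℕ) then (1 - c.acc (r i) s) else 1)
        = (fun k => if k < (j : ℕ) then (1 - c.accN r s k) else 1) (i : ℕ) := by
    intro i
    by_cases hlt : (i : ℕ) < (j : ℕ) <;> simp [hlt, accN_coe]
  rw [Finset.prod_congr rfl fun i _ => h1 i,
    Fin.prod_univ_eq_prod_range (fun k => if k < (j : ℕ) then (1 - c.accN r s k) else 1) c.J,
    ← Finset.prod_range_mul_prod_Ico _ (le_of_lt j.isLt)]
  have e1 : ∏ k ∈ Finset.range (j : ℕ), (if k < (j : ℕ) then (1 - c.accN r s k) else 1)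
      = ∏ k ∈ Finset.range (j : ℕ), (1 - c.accN r s k) :=
    Finset.prod_congr rfl fun k hk => if_pos (Finset.mem_range.mp hk)
  have e2 : ∏ k ∈ Finset.Ico (j : ℕ) c.J, (if k < (j : ℕ) then (1 - c.accN r s k) else 1) = 1 :=
    Finset.prod_eq_one fun k hk => if_neg (not_lt.mpr (Finset.mem_Ico.mp hk).1)
  rw [e1, e2, mul_one]

lemma rowFail (s : 𝓢) : ∑ r : Fin c.J → 𝓤, c.wR r * c.pfail r s = (1 - c.pbar s) ^ c.J := by
  have h : ∀ r : Fin c.J → 𝓤, c.wR r * c.pfail r s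
      = (∏ i, c.PU (r i)) * (∏ i, (fun u => 1 - c.acc u s) (r i)) := by
    intro r
    rw [wR, c.pfail_eq]
  rw [Finset.sum_congr rfl fun r _ => h r, exp_all (w := c.PU) c.J (fun u => 1 - c.acc u s),
    c.sum_PU_one_sub_acc]

lemma rowW1 (s : 𝓢) (j : Fin c.J) (h : 𝓤 → ℝ) :
    ∑ r : Fin c.J → 𝓤, c.wR r * (c.w1 r s j * h (r j))
      = (1 - c.pbar s) ^ (j : ℕ) * ∑ u, c.PU u * (c.acc u s * h u) := by
  have h1 : ∀ r : Fin c.J → 𝓤, c.wR r * (c.w1 r s j * h (r j))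
      = (∏ i, c.PU (r i)) *
          ((∏ i : Fin c.J, (if (i : ℕ) < (j : ℕ) then (fun u => 1 - c.acc u s) (r i) else 1))
            * (fun u => c.acc u s * h u) (r j)) := by
    intro r
    rw [wR, w1, c.prefix_eq]
    ring
  rw [Finset.sum_congr rfl fun r _ => h1 r,
    exp_prefix c.PU_sum c.J (fun u => 1 - c.acc u s) (fun u => c.acc u s * h u) j,
    c.sum_PU_one_sub_acc]

lemma rowOne (j' : Fin c.J) (h : 𝓤 → ℝ) :
    ∑ r : Fin c.J → 𝓤, c.wR r * h (r j') = ∑ u, c.PU u * h u := by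
  have h1 : ∀ r : Fin c.J → 𝓤, c.wR r * h (r j') = (∏ i, c.PU (r i)) * h (r j') := by
    intro r; rw [wR]
  rw [Finset.sum_congr rfl fun r _ => h1 r, exp_one c.PU_sum j' h]

lemma corOne (m : Fin c.M) (h : (Fin c.J → 𝓤) → ℝ) :
    c.EC (fun C => h (C m)) = ∑ r : Fin c.J → 𝓤, c.wR r * h r := by
  unfold EC
  have h1 : ∀ C : Fin c.M → Fin c.J → 𝓤, c.wCb C * h (C m)
      = (∏ m', c.wR (C m')) * h (C m) := by
    intro C; rw [wCb]
  rw [Finset.sum_congr rfl fun C _ => h1 C, exp_one c.wR_sum m h]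

lemma corTwo {m m' : Fin c.M} (hne : m ≠ m') (h₁ h₂ : (Fin c.J → 𝓤) → ℝ) :
    c.EC (fun C => h₁ (C m) * h₂ (C m'))
      = (∑ r : Fin c.J → 𝓤, c.wR r * h₁ r) * (∑ r : Fin c.J → 𝓤, c.wR r * h₂ r) := by
  unfold EC
  have h1 : ∀ C : Fin c.M → Fin c.J → 𝓤, c.wCb C * (h₁ (C m) * h₂ (C m'))
      = (∏ m'', c.wR (C m'')) * (h₁ (C m) * h₂ (C m')) := by
    intro C; rw [wCb]
  rw [Finset.sum_congr rfl fun C _ => h1 C, exp_two c.wR_sum hne h₁ h₂]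

end GPC

namespace GPC

open GPaux

variable {𝓢 𝓤 𝓧 𝓨 : Type} [Fintype 𝓢] [Fintype 𝓤] [Fintype 𝓧] [Fintype 𝓨]
variable (c : GPC 𝓢 𝓤 𝓧 𝓨)

/-- Conditional error term for message `m` and state `s`. -/
noncomputable def T (C : Fin c.M → Fin c.J → 𝓤) (m : Fin c.M) (s : 𝓢) : ℝ :=
  ∑ x, ∑ y, c.encp C m s x * (c.W x s).p y * (1 - ind (m = c.decOut C y))

lemma errEq (C : Fin c.M → Fin c.J → 𝓤) :
    pErrorGP c.M c.qS c.W (c.enc C) (c.dec C)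
      = ∑ m, (1 / (c.M : ℝ)) * ∑ s, c.qS.p s * c.T C m s := by
  unfold pErrorGP T
  refine Finset.sum_congr rfl fun m _ => ?_
  rw [Finset.mul_sum]
  refine Finset.sum_congr rfl fun s _ => ?_
  rw [Finset.mul_sum, Finset.mul_sum]
  refine Finset.sum_congr rfl fun x _ => ?_
  rw [Finset.mul_sum, Finset.mul_sum]
  refine Finset.sum_congr rfl fun y _ => ?_
  show (1 / (c.M : ℝ)) * c.qS.p s * (c.enc C m s).p x * (c.W x s).p y
      * (1 - (c.dec C y).p m) = _
  have he : (c.enc C m s).p x = c.encp C m s x := rfl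
  have hd : (c.dec C y).p m = ind (m = c.decOut C y) := rfl
  rw [he, hd]
  ring

lemma T_eq (C : Fin c.M → Fin c.J → 𝓤) (m : Fin c.M) (s : 𝓢) :
    c.T C m s = ∑ y,
      ((∑ j, c.w1 (C m) s j * (c.W (c.f (C m j) s) s).p y)
        + c.pfail (C m) s * (c.W c.x0 s).p y) * (1 - ind (m = c.decOut C y)) := by
  rw [T, Finset.sum_comm]
  refine Finset.sum_congr rfl fun y _ => ?_
  rw [← Finset.sum_mul]
  congr 1
  unfold encp
  simp only [add_mul, Finset.sum_mul]
  rw [Finset.sum_add_distrib]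
  congr 1
  · rw [Finset.sum_comm]
    refine Finset.sum_congr rfl fun j _ => ?_
    have h : ∀ x, c.w1 (C m) s j * ind (c.f (C m j) s = x) * (c.W x s).p y
        = c.w1 (C m) s j * (ind (c.f (C m j) s = x) * (c.W x s).p y) := fun x => by ring
    rw [Finset.sum_congr rfl fun x _ => h x, ← Finset.mul_sum,
      sum_ind_mul (c.f (C m j) s) (fun x => (c.W x s).p y)]
  · have h : ∀ x, c.pfail (C m) s * ind (x = c.x0) * (c.W x s).p y
        = c.pfail (C m) s * (ind (x = c.x0) * (c.W x s).p y) := fun x => by ring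
    rw [Finset.sum_congr rfl fun x _ => h x, ← Finset.mul_sum,
      sum_ind_mul' c.x0 (fun x => (c.W x s).p y)]

lemma d_le (C : Fin c.M → Fin c.J → 𝓤) (m : Fin c.M) (j : Fin c.J) (y : 𝓨) :
    1 - ind (m = c.decOut C y)
      ≤ ind (¬ c.Pass (C m j) y)
        + ∑ m' ∈ Finset.univ.erase m, ind (∃ j', c.Pass (C m' j') y) := by
  have hsum0 : 0 ≤ ∑ m' ∈ Finset.univ.erase m, ind (∃ j', c.Pass (C m' j') y) :=
    Finset.sum_nonneg fun m' _ => ind_nonneg _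
  by_cases hp : c.Pass (C m j) y
  · by_cases hw : ∃ m', m' ≠ m ∧ ∃ j', c.Pass (C m' j') y
    · obtain ⟨m', hm', hj'⟩ := hw
      have h1 : (1:ℝ) ≤ ∑ m'' ∈ Finset.univ.erase m, ind (∃ j', c.Pass (C m'' j') y) := by
        have hmem : m' ∈ Finset.univ.erase m := Finset.mem_erase.mpr ⟨hm', Finset.mem_univ _⟩
        have := Finset.single_le_sum
          (f := fun m'' => ind (∃ j', c.Pass (C m'' j') y))
          (fun m'' _ => ind_nonneg _) hmem
        simpa [ind_pos hj'] using this
      have h2 : 1 - ind (m = c.decOut C y) ≤ 1 := by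
        linarith [ind_nonneg (m = c.decOut C y)]
      linarith [ind_nonneg (¬ c.Pass (C m j) y)]
    · have hde : c.decOut C y = m :=
        c.decOut_eq ⟨j, hp⟩ (fun m' hm' hex => hw ⟨m', hm', hex⟩)
      rw [hde, ind_pos rfl]
      linarith [ind_nonneg (¬ c.Pass (C m j) y)]
  · rw [ind_pos hp]
    linarith [ind_nonneg (m = c.decOut C y)]

lemma T_le (C : Fin c.M → Fin c.J → 𝓤) (m : Fin c.M) (s : 𝓢) :
    c.T C m s ≤ c.pfail (C m) s
      + (∑ j, c.w1 (C m) s j * c.beta (C m j) s)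
      + ∑ j, c.w1 (C m) s j * ∑ y, (c.W (c.f (C m j) s) s).p y *
          (∑ m' ∈ Finset.univ.erase m, ind (∃ j', c.Pass (C m' j') y)) := by
  rw [T_eq]
  have hsplit : ∀ y : 𝓨,
      ((∑ j, c.w1 (C m) s j * (c.W (c.f (C m j) s) s).p y)
        + c.pfail (C m) s * (c.W c.x0 s).p y) * (1 - ind (m = c.decOut C y))
      = (∑ j, c.w1 (C m) s j * (c.W (c.f (C m j) s) s).p y) * (1 - ind (m = c.decOut C y))
        + (c.pfail (C m) s * (c.W c.x0 s).p y) * (1 - ind (m = c.decOut C y)) :=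
    fun y => add_mul _ _ _
  rw [Finset.sum_congr rfl fun y _ => hsplit y, Finset.sum_add_distrib]
  have hB : ∑ y, (c.pfail (C m) s * (c.W c.x0 s).p y) * (1 - ind (m = c.decOut C y))
      ≤ c.pfail (C m) s := by
    calc ∑ y, (c.pfail (C m) s * (c.W c.x0 s).p y) * (1 - ind (m = c.decOut C y))
        ≤ ∑ y, c.pfail (C m) s * (c.W c.x0 s).p y := by
          apply Finset.sum_le_sum
          intro y _
          apply mul_le_of_le_one_right
            (mul_nonneg (c.pfail_nonneg _ _) ((c.W _ _).nonneg y))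
          linarith [ind_nonneg (m = c.decOut C y)]
      _ = c.pfail (C m) s := by rw [← Finset.mul_sum, (c.W c.x0 s).sum_eq_one, mul_one]
  have hA : ∑ y, (∑ j, c.w1 (C m) s j * (c.W (c.f (C m j) s) s).p y)
        * (1 - ind (m = c.decOut C y))
      ≤ (∑ j, c.w1 (C m) s j * c.beta (C m j) s)
        + ∑ j, c.w1 (C m) s j * ∑ y, (c.W (c.f (C m j) s) s).p y *
            (∑ m' ∈ Finset.univ.erase m, ind (∃ j', c.Pass (C m' j') y)) := by
    have hswap : ∑ y, (∑ j, c.w1 (C m) s j * (c.W (c.f (C m j) s) s).p y)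
          * (1 - ind (m = c.decOut C y))
        = ∑ j, ∑ y, c.w1 (C m) s j * (c.W (c.f (C m j) s) s).p y
            * (1 - ind (m = c.decOut C y)) := by
      simp only [Finset.sum_mul]
      exact Finset.sum_comm
    rw [hswap]
    have hper : ∀ j : Fin c.J,
        ∑ y, c.w1 (C m) s j * (c.W (c.f (C m j) s) s).p y * (1 - ind (m = c.decOut C y))
        ≤ c.w1 (C m) s j * c.beta (C m j) s
          + c.w1 (C m) s j * ∑ y, (c.W (c.f (C m j) s) s).p y *
              (∑ m' ∈ Finset.univ.erase m, ind (∃ j', c.Pass (C m' j') y)) := by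
      intro j
      have hstep : ∀ y : 𝓨,
          c.w1 (C m) s j * (c.W (c.f (C m j) s) s).p y * (1 - ind (m = c.decOut C y))
          ≤ c.w1 (C m) s j * ((c.W (c.f (C m j) s) s).p y * ind (¬ c.Pass (C m j) y))
            + c.w1 (C m) s j * ((c.W (c.f (C m j) s) s).p y *
                (∑ m' ∈ Finset.univ.erase m, ind (∃ j', c.Pass (C m' j') y))) := by
        intro y
        have hnn : 0 ≤ c.w1 (C m) s j * (c.W (c.f (C m j) s) s).p y :=
          mul_nonneg (c.w1_nonneg _ _ _) ((c.W _ _).nonneg y)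
        have := mul_le_mul_of_nonneg_left (c.d_le C m j y) hnn
        calc c.w1 (C m) s j * (c.W (c.f (C m j) s) s).p y * (1 - ind (m = c.decOut C y))
            ≤ c.w1 (C m) s j * (c.W (c.f (C m j) s) s).p y *
              (ind (¬ c.Pass (C m j) y)
                + ∑ m' ∈ Finset.univ.erase m, ind (∃ j', c.Pass (C m' j') y)) := this
          _ = _ := by ring
      calc ∑ y, c.w1 (C m) s j * (c.W (c.f (C m j) s) s).p y * (1 - ind (m = c.decOut C y))
          ≤ ∑ y, (c.w1 (C m) s j * ((c.W (c.f (C m j) s) s).p y * ind (¬ c.Pass (C m j) y))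
              + c.w1 (C m) s j * ((c.W (c.f (C m j) s) s).p y *
                  (∑ m' ∈ Finset.univ.erase m, ind (∃ j', c.Pass (C m' j') y)))) :=
            Finset.sum_le_sum fun y _ => hstep y
        _ = c.w1 (C m) s j * c.beta (C m j) s
            + c.w1 (C m) s j * ∑ y, (c.W (c.f (C m j) s) s).p y *
                (∑ m' ∈ Finset.univ.erase m, ind (∃ j', c.Pass (C m' j') y)) := by
            rw [Finset.sum_add_distrib, ← Finset.mul_sum, ← Finset.mul_sum, beta]
    calc ∑ j, ∑ y, c.w1 (C m) s j * (c.W (c.f (C m j) s) s).p y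
          * (1 - ind (m = c.decOut C y))
        ≤ ∑ j, (c.w1 (C m) s j * c.beta (C m j) s
            + c.w1 (C m) s j * ∑ y, (c.W (c.f (C m j) s) s).p y *
                (∑ m' ∈ Finset.univ.erase m, ind (∃ j', c.Pass (C m' j') y))) :=
          Finset.sum_le_sum fun j _ => hper j
      _ = _ := Finset.sum_add_distrib
  linarith [hA, hB]

end GPC

namespace GPaux

lemma ind_not (P : Prop) : ind (¬ P) = 1 - ind P := by
  classical by_cases h : P <;> simp [ind, h]

lemma ind_congr {P Q : Prop} (h : P ↔ Q) : ind P = ind Q := by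
  classical by_cases hp : P
  · rw [ind_pos hp, ind_pos (h.mp hp)]
  · rw [ind_neg hp, ind_neg (fun hq => hp (h.mpr hq))]

lemma ind_exists_le {α : Type*} [Fintype α] (P : α → Prop) :
    ind (∃ i, P i) ≤ ∑ i, ind (P i) := by
  classical
  by_cases h : ∃ i, P i
  · obtain ⟨i, hi⟩ := h
    rw [ind_pos ⟨i, hi⟩]
    have := Finset.single_le_sum (f := fun i' => ind (P i'))
      (fun i' _ => ind_nonneg _) (Finset.mem_univ i)
    simpa [ind_pos hi] using this
  · rw [ind_neg h]
    exact Finset.sum_nonneg fun i _ => ind_nonneg _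

end GPaux

namespace GPC

open GPaux

variable {𝓢 𝓤 𝓧 𝓨 : Type} [Fintype 𝓢] [Fintype 𝓤] [Fintype 𝓧] [Fintype 𝓨]
variable (c : GPC 𝓢 𝓤 𝓧 𝓨)

lemma EC_add (F G : (Fin c.M → Fin c.J → 𝓤) → ℝ) :
    c.EC (fun C => F C + G C) = c.EC F + c.EC G := by
  unfold EC
  rw [← Finset.sum_add_distrib]
  exact Finset.sum_congr rfl fun C _ => by ring

lemma geomFin (s : 𝓢) : ∑ j : Fin c.J, (1 - c.pbar s) ^ (j : ℕ) * c.pbar s ≤ 1 := by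
  rw [Fin.sum_univ_eq_sum_range (fun j => (1 - c.pbar s) ^ j * c.pbar s) c.J]
  have h := GPaux.telescope (fun _ => c.pbar s) c.J
  simp only [Finset.prod_const, Finset.card_range] at h
  rw [h]
  have : 0 ≤ (1 - c.pbar s) ^ c.J := pow_nonneg (by linarith [c.pbar_le_one s]) c.J
  linarith

noncomputable def kap (s : 𝓢) (y : 𝓨) : ℝ :=
  ∑ u, c.PU u * (c.acc u s * (c.W (c.f u s) s).p y)

lemma kap_nonneg (s : 𝓢) (y : 𝓨) : 0 ≤ c.kap s y :=
  Finset.sum_nonneg fun u _ => mul_nonneg (c.PU_nonneg u)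
    (mul_nonneg (c.acc_nonneg u s) ((c.W _ _).nonneg y))

lemma kap_sum (s : 𝓢) : ∑ y, c.kap s y = c.pbar s := by
  unfold kap pbar
  rw [Finset.sum_comm]
  refine Finset.sum_congr rfl fun u _ => ?_
  rw [← Finset.mul_sum, ← Finset.mul_sum, (c.W (c.f u s) s).sum_eq_one, mul_one]

lemma EC_T1 (m : Fin c.M) (s : 𝓢) :
    c.EC (fun C => c.pfail (C m) s) = (1 - c.pbar s) ^ c.J := by
  rw [c.corOne m (fun r => c.pfail r s), c.rowFail s]

lemma EC_T2 (m : Fin c.M) (s : 𝓢) :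
    c.EC (fun C => ∑ j, c.w1 (C m) s j * c.beta (C m j) s)
      = ∑ j : Fin c.J, (1 - c.pbar s) ^ (j : ℕ)
          * ∑ u, c.PU u * (c.acc u s * c.beta u s) := by
  rw [c.EC_sum Finset.univ (fun (j : Fin c.J) C => c.w1 (C m) s j * c.beta (C m j) s)]
  refine Finset.sum_congr rfl fun j _ => ?_
  rw [c.corOne m (fun r => c.w1 r s j * c.beta (r j) s), c.rowW1 s j (fun u => c.beta u s)]

lemma EC_T3 (m : Fin c.M) (s : 𝓢) :
    c.EC (fun C => ∑ j, c.w1 (C m) s j * ∑ y, (c.W (c.f (C m j) s) s).p y *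
        (∑ m' ∈ Finset.univ.erase m, ind (∃ j', c.Pass (C m' j') y)))
      ≤ (2:ℝ) ^ (-c.γ) := by
  have hMJ := c.MJ_pos
  have hpow : ∀ j : Fin c.J, 0 ≤ (1 - c.pbar s) ^ (j : ℕ) :=
    fun j => pow_nonneg (by linarith [c.pbar_le_one s]) _
  set Bd : ℝ := (2:ℝ) ^ (-c.γ) / ((c.M : ℝ) * (c.J : ℝ)) with hBd
  have hBd0 : 0 ≤ Bd := div_nonneg (le_of_lt (rpow_pos _)) (le_of_lt hMJ)
  -- Step 1 : pointwise union bound over wrong codewords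
  have h1 : ∀ C : Fin c.M → Fin c.J → 𝓤,
      (∑ j, c.w1 (C m) s j * ∑ y, (c.W (c.f (C m j) s) s).p y *
          (∑ m' ∈ Finset.univ.erase m, ind (∃ j', c.Pass (C m' j') y)))
      ≤ ∑ j : Fin c.J, ∑ y, ∑ m' ∈ Finset.univ.erase m, ∑ j' : Fin c.J,
          (c.w1 (C m) s j * (c.W (c.f (C m j) s) s).p y) * ind (c.Pass (C m' j') y) := by
    intro C
    apply Finset.sum_le_sum
    intro j _
    have hw : ∀ y : 𝓨, (∑ m' ∈ Finset.univ.erase m, ind (∃ j', c.Pass (C m' j') y))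
        ≤ ∑ m' ∈ Finset.univ.erase m, ∑ j' : Fin c.J, ind (c.Pass (C m' j') y) :=
      fun y => Finset.sum_le_sum fun m' _ => ind_exists_le (fun j' => c.Pass (C m' j') y)
    calc c.w1 (C m) s j * ∑ y, (c.W (c.f (C m j) s) s).p y *
          (∑ m' ∈ Finset.univ.erase m, ind (∃ j', c.Pass (C m' j') y))
        = ∑ y, (c.w1 (C m) s j * (c.W (c.f (C m j) s) s).p y) *
            (∑ m' ∈ Finset.univ.erase m, ind (∃ j', c.Pass (C m' j') y)) := by
          rw [Finset.mul_sum]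
          exact Finset.sum_congr rfl fun y _ => by ring
      _ ≤ ∑ y, (c.w1 (C m) s j * (c.W (c.f (C m j) s) s).p y) *
            (∑ m' ∈ Finset.univ.erase m, ∑ j' : Fin c.J, ind (c.Pass (C m' j') y)) := by
          apply Finset.sum_le_sum
          intro y _
          exact mul_le_mul_of_nonneg_left (hw y)
            (mul_nonneg (c.w1_nonneg _ _ _) ((c.W _ _).nonneg y))
      _ = ∑ y, ∑ m' ∈ Finset.univ.erase m, ∑ j' : Fin c.J,
            (c.w1 (C m) s j * (c.W (c.f (C m j) s) s).p y) * ind (c.Pass (C m' j') y) := by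
          refine Finset.sum_congr rfl fun y _ => ?_
          rw [Finset.mul_sum]
          exact Finset.sum_congr rfl fun m' _ => by rw [Finset.mul_sum]
  -- Step 2 : expectation of the union bound
  have h2 : c.EC (fun C => ∑ j : Fin c.J, ∑ y, ∑ m' ∈ Finset.univ.erase m, ∑ j' : Fin c.J,
        (c.w1 (C m) s j * (c.W (c.f (C m j) s) s).p y) * ind (c.Pass (C m' j') y))
      = ∑ j : Fin c.J, ∑ y, ∑ m' ∈ Finset.univ.erase m, ∑ j' : Fin c.J,
          c.EC (fun C => (c.w1 (C m) s j * (c.W (c.f (C m j) s) s).p y)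
            * ind (c.Pass (C m' j') y)) := by
    rw [c.EC_sum]
    refine Finset.sum_congr rfl fun j _ => ?_
    rw [c.EC_sum]
    refine Finset.sum_congr rfl fun y _ => ?_
    rw [c.EC_sum]
    refine Finset.sum_congr rfl fun m' _ => ?_
    rw [c.EC_sum]
  -- Step 3 : evaluate each expectation and bound it
  have h3 : ∀ (j : Fin c.J) (y : 𝓨), ∀ m' ∈ Finset.univ.erase m, ∀ j' : Fin c.J,
      c.EC (fun C => (c.w1 (C m) s j * (c.W (c.f (C m j) s) s).p y)
          * ind (c.Pass (C m' j') y))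
        ≤ ((1 - c.pbar s) ^ (j : ℕ) * c.kap s y) * Bd := by
    intro j y m' hm' j'
    have hne : m ≠ m' := fun h => (Finset.mem_erase.mp hm').1 h.symm
    have heq := c.corTwo hne (fun r => c.w1 r s j * (c.W (c.f (r j) s) s).p y)
      (fun r => ind (c.Pass (r j') y))
    rw [heq, c.rowW1 s j (fun u => (c.W (c.f u s) s).p y),
      c.rowOne j' (fun u => ind (c.Pass u y))]
    have hfirst0 : 0 ≤ (1 - c.pbar s) ^ (j : ℕ) * c.kap s y :=
      mul_nonneg (hpow j) (c.kap_nonneg s y)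
    have := c.pass_sum y
    calc (1 - c.pbar s) ^ (j : ℕ) * c.kap s y * (∑ u, c.PU u * ind (c.Pass u y))
        ≤ (1 - c.pbar s) ^ (j : ℕ) * c.kap s y * Bd :=
          mul_le_mul_of_nonneg_left this hfirst0
      _ = ((1 - c.pbar s) ^ (j : ℕ) * c.kap s y) * Bd := by ring
  -- Step 4 : collect
  have hcard : ((Finset.univ.erase m).card : ℝ) ≤ (c.M : ℝ) := by
    have h4 : (Finset.univ.erase m).card ≤ (Finset.univ : Finset (Fin c.M)).card :=
      Finset.card_le_card (Finset.erase_subset _ _)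
    have h5 : ((Finset.univ : Finset (Fin c.M)).card : ℝ) = (c.M : ℝ) := by
      simp
    calc ((Finset.univ.erase m).card : ℝ) ≤ ((Finset.univ : Finset (Fin c.M)).card : ℝ) := by
          exact_mod_cast h4
      _ = (c.M : ℝ) := h5
  have h6 : ∀ (j : Fin c.J) (y : 𝓨),
      ∑ m' ∈ Finset.univ.erase m, ∑ j' : Fin c.J,
          c.EC (fun C => (c.w1 (C m) s j * (c.W (c.f (C m j) s) s).p y)
            * ind (c.Pass (C m' j') y))
      ≤ ((c.M : ℝ) * (c.J : ℝ) * Bd) * ((1 - c.pbar s) ^ (j : ℕ) * c.kap s y) := by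
    intro j y
    have hfirst0 : 0 ≤ (1 - c.pbar s) ^ (j : ℕ) * c.kap s y :=
      mul_nonneg (hpow j) (c.kap_nonneg s y)
    calc ∑ m' ∈ Finset.univ.erase m, ∑ j' : Fin c.J,
          c.EC (fun C => (c.w1 (C m) s j * (c.W (c.f (C m j) s) s).p y)
            * ind (c.Pass (C m' j') y))
        ≤ ∑ m' ∈ Finset.univ.erase m, ∑ j' : Fin c.J,
            ((1 - c.pbar s) ^ (j : ℕ) * c.kap s y) * Bd :=
          Finset.sum_le_sum fun m' hm' =>
            Finset.sum_le_sum fun j' _ => h3 j y m' hm' j'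
      _ = ((Finset.univ.erase m).card : ℝ) * ((c.J : ℝ)
            * (((1 - c.pbar s) ^ (j : ℕ) * c.kap s y) * Bd)) := by
          rw [Finset.sum_const, Finset.sum_const]
          simp only [nsmul_eq_mul, Finset.card_univ, Fintype.card_fin]
          try ring
      _ ≤ ((c.M : ℝ) * (c.J : ℝ) * Bd) * ((1 - c.pbar s) ^ (j : ℕ) * c.kap s y) := by
          have hJ0 : (0:ℝ) ≤ (c.J : ℝ) := Nat.cast_nonneg _
          have hx : 0 ≤ (c.J : ℝ) * (((1 - c.pbar s) ^ (j : ℕ) * c.kap s y) * Bd) :=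
            mul_nonneg hJ0 (mul_nonneg hfirst0 hBd0)
          have := mul_le_mul_of_nonneg_right hcard hx
          calc ((Finset.univ.erase m).card : ℝ) * ((c.J : ℝ)
                * (((1 - c.pbar s) ^ (j : ℕ) * c.kap s y) * Bd)) ≤
              (c.M : ℝ) * ((c.J : ℝ)
                * (((1 - c.pbar s) ^ (j : ℕ) * c.kap s y) * Bd)) := this
            _ = ((c.M : ℝ) * (c.J : ℝ) * Bd) * ((1 - c.pbar s) ^ (j : ℕ) * c.kap s y) := by
                ring
  have h7 : ∑ j : Fin c.J, ∑ y : 𝓨, (1 - c.pbar s) ^ (j : ℕ) * c.kap s y ≤ 1 := by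
    have heq : ∀ j : Fin c.J, ∑ y : 𝓨, (1 - c.pbar s) ^ (j : ℕ) * c.kap s y
        = (1 - c.pbar s) ^ (j : ℕ) * c.pbar s := by
      intro j
      rw [← Finset.mul_sum, c.kap_sum s]
    rw [Finset.sum_congr rfl fun j _ => heq j]
    exact c.geomFin s
  have hMJBd : (c.M : ℝ) * (c.J : ℝ) * Bd = (2:ℝ) ^ (-c.γ) := by
    rw [hBd]
    field_simp
    exact div_self hMJ.ne'
  calc c.EC (fun C => ∑ j, c.w1 (C m) s j * ∑ y, (c.W (c.f (C m j) s) s).p y *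
          (∑ m' ∈ Finset.univ.erase m, ind (∃ j', c.Pass (C m' j') y)))
      ≤ c.EC (fun C => ∑ j : Fin c.J, ∑ y, ∑ m' ∈ Finset.univ.erase m, ∑ j' : Fin c.J,
          (c.w1 (C m) s j * (c.W (c.f (C m j) s) s).p y) * ind (c.Pass (C m' j') y)) :=
        c.EC_mono h1
    _ = ∑ j : Fin c.J, ∑ y, ∑ m' ∈ Finset.univ.erase m, ∑ j' : Fin c.J,
          c.EC (fun C => (c.w1 (C m) s j * (c.W (c.f (C m j) s) s).p y)
            * ind (c.Pass (C m' j') y)) := h2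
    _ ≤ ∑ j : Fin c.J, ∑ y, ((c.M : ℝ) * (c.J : ℝ) * Bd)
          * ((1 - c.pbar s) ^ (j : ℕ) * c.kap s y) :=
        Finset.sum_le_sum fun j _ => Finset.sum_le_sum fun y _ => h6 j y
    _ = ((c.M : ℝ) * (c.J : ℝ) * Bd)
          * ∑ j : Fin c.J, ∑ y, (1 - c.pbar s) ^ (j : ℕ) * c.kap s y := by
        rw [Finset.mul_sum]
        exact Finset.sum_congr rfl fun j _ => by rw [Finset.mul_sum]
    _ ≤ ((c.M : ℝ) * (c.J : ℝ) * Bd) * 1 := by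
        apply mul_le_mul_of_nonneg_left h7
        rw [hMJBd]
        exact le_of_lt (rpow_pos _)
    _ = (2:ℝ) ^ (-c.γ) := by rw [mul_one, hMJBd]

end GPC

namespace GPC

open GPaux

variable {𝓢 𝓤 𝓧 𝓨 : Type} [Fintype 𝓢] [Fintype 𝓤] [Fintype 𝓧] [Fintype 𝓨]
variable (c : GPC 𝓢 𝓤 𝓧 𝓨)

lemma EC_const_mul (a : ℝ) (F : (Fin c.M → Fin c.J → 𝓤) → ℝ) :
    c.EC (fun C => a * F C) = a * c.EC F := by
  unfold EC
  rw [Finset.mul_sum]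
  exact Finset.sum_congr rfl fun C _ => by ring

lemma EC_T_le (m : Fin c.M) (s : 𝓢) :
    c.EC (fun C => c.T C m s) ≤
      (1 - c.pbar s) ^ c.J + (∑ j ∈ Finset.range c.J, (1 - c.pbar s) ^ j) *
        (∑ u, c.PU u * (c.acc u s * c.beta u s)) + (2:ℝ) ^ (-c.γ) := by
  have hstep := c.EC_mono (fun C => c.T_le C m s)
  have hsplit : c.EC (fun C => c.pfail (C m) s
      + (∑ j, c.w1 (C m) s j * c.beta (C m j) s)
      + ∑ j, c.w1 (C m) s j * ∑ y, (c.W (c.f (C m j) s) s).p y *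
          (∑ m' ∈ Finset.univ.erase m, ind (∃ j', c.Pass (C m' j') y)))
      = c.EC (fun C => c.pfail (C m) s)
        + c.EC (fun C => ∑ j, c.w1 (C m) s j * c.beta (C m j) s)
        + c.EC (fun C => ∑ j, c.w1 (C m) s j * ∑ y, (c.W (c.f (C m j) s) s).p y *
            (∑ m' ∈ Finset.univ.erase m, ind (∃ j', c.Pass (C m' j') y))) := by
    rw [c.EC_add (fun C => c.pfail (C m) s
        + (∑ j, c.w1 (C m) s j * c.beta (C m j) s)) _,
      c.EC_add (fun C => c.pfail (C m) s) _]
  have h2 : ∑ j : Fin c.J, (1 - c.pbar s) ^ (j : ℕ)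
        * ∑ u, c.PU u * (c.acc u s * c.beta u s)
      = (∑ j ∈ Finset.range c.J, (1 - c.pbar s) ^ j)
        * (∑ u, c.PU u * (c.acc u s * c.beta u s)) := by
    rw [Finset.sum_mul,
      ← Fin.sum_univ_eq_sum_range
        (fun j => (1 - c.pbar s) ^ j * ∑ u, c.PU u * (c.acc u s * c.beta u s)) c.J]
  calc c.EC (fun C => c.T C m s)
      ≤ c.EC (fun C => c.pfail (C m) s
          + (∑ j, c.w1 (C m) s j * c.beta (C m j) s)
          + ∑ j, c.w1 (C m) s j * ∑ y, (c.W (c.f (C m j) s) s).p y *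
              (∑ m' ∈ Finset.univ.erase m, ind (∃ j', c.Pass (C m' j') y))) := hstep
    _ = c.EC (fun C => c.pfail (C m) s)
        + c.EC (fun C => ∑ j, c.w1 (C m) s j * c.beta (C m j) s)
        + c.EC (fun C => ∑ j, c.w1 (C m) s j * ∑ y, (c.W (c.f (C m j) s) s).p y *
            (∑ m' ∈ Finset.univ.erase m, ind (∃ j', c.Pass (C m' j') y))) := hsplit
    _ ≤ (1 - c.pbar s) ^ c.J + (∑ j ∈ Finset.range c.J, (1 - c.pbar s) ^ j) *
          (∑ u, c.PU u * (c.acc u s * c.beta u s)) + (2:ℝ) ^ (-c.γ) := by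
        rw [c.EC_T1 m s, c.EC_T2 m s]
        have := c.EC_T3 m s
        rw [h2]
        linarith
lemma qsEC_le (m : Fin c.M) (s : 𝓢) :
    c.qS.p s * c.EC (fun C => c.T C m s)
      ≤ c.qS.p s * ((1 - c.aa s + c.bb s) + 2 * (2:ℝ) ^ (-c.γ)) := by
  rcases (c.qS.nonneg s).lt_or_eq with hs | hs
  · apply mul_le_mul_of_nonneg_left _ (le_of_lt hs)
    have h1 := c.EC_T_le m s
    rw [c.pbar_eq hs, c.kappa_eq hs] at h1
    have hp1 : (2:ℝ) ^ c.γ * c.aa s / (c.J : ℝ) ≤ 1 := by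
      rw [← c.pbar_eq hs]
      exact c.pbar_le_one s
    have h2 := GPaux.key_ineq c.J c.hJ ((2:ℝ) ^ c.γ) (c.aa s) (c.bb s)
      (one_le_two_rpow (le_of_lt c.hγ)) (c.aa_nonneg s) (c.aa_le_one s)
      (c.bb_nonneg s) (c.bb_le_aa s) hp1
    have h3 : Real.exp (-(2:ℝ) ^ c.γ) ≤ (2:ℝ) ^ (-c.γ) := exp_le_rpow
    linarith
  · rw [← hs, zero_mul, zero_mul]

lemma event_eq : ∑ s, c.qS.p s * (1 - c.aa s + c.bb s)
    = ∑ u, ∑ s, ∑ y, qUSY c.qS c.qU c.W c.f u s y * ind (¬ c.G u s ∨ ¬ c.Pass u y) := by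
  have hrhs : ∑ u, ∑ s, ∑ y, qUSY c.qS c.qU c.W c.f u s y * ind (¬ c.G u s ∨ ¬ c.Pass u y)
      = ∑ s, ∑ u, ∑ y, qUSY c.qS c.qU c.W c.f u s y * ind (¬ c.G u s ∨ ¬ c.Pass u y) :=
    Finset.sum_comm
  rw [hrhs]
  refine Finset.sum_congr rfl fun s _ => ?_
  have hper : ∀ u, ∑ y, qUSY c.qS c.qU c.W c.f u s y * ind (¬ c.G u s ∨ ¬ c.Pass u y)
      = c.qS.p s * ((c.qU s).p u * ((1 - ind (c.G u s)) + ind (c.G u s) * c.beta u s)) := by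
    intro u
    by_cases hG : c.G u s
    · have hor : ∀ y, (¬ c.G u s ∨ ¬ c.Pass u y) ↔ ¬ c.Pass u y := fun y => by tauto
      have hterm : ∀ y, qUSY c.qS c.qU c.W c.f u s y * ind (¬ c.G u s ∨ ¬ c.Pass u y)
          = (c.qS.p s * (c.qU s).p u) * ((c.W (c.f u s) s).p y * ind (¬ c.Pass u y)) := by
        intro y
        rw [ind_congr (hor y)]
        simp only [qUSY]
        ring
      rw [Finset.sum_congr rfl fun y _ => hterm y, ← Finset.mul_sum, ← beta,
        ind_pos hG]
      ring
    · have hor : ∀ y : 𝓨, (¬ c.G u s ∨ ¬ c.Pass u y) ↔ True := fun y => by tauto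
      have hterm : ∀ y, qUSY c.qS c.qU c.W c.f u s y * ind (¬ c.G u s ∨ ¬ c.Pass u y)
          = (c.qS.p s * (c.qU s).p u) * (c.W (c.f u s) s).p y := by
        intro y
        rw [ind_congr (hor y), ind_pos trivial]
        simp only [qUSY]
        ring
      rw [Finset.sum_congr rfl fun y _ => hterm y, ← Finset.mul_sum,
        (c.W (c.f u s) s).sum_eq_one, ind_neg hG]
      ring
  rw [Finset.sum_congr rfl fun u _ => hper u, ← Finset.mul_sum]
  congr 1
  simp only [mul_add]
  rw [Finset.sum_add_distrib]
  have h1 : ∑ u, (c.qU s).p u * (1 - ind (c.G u s)) = 1 - c.aa s := by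
    simp only [mul_sub, mul_one]
    rw [Finset.sum_sub_distrib, (c.qU s).sum_eq_one, aa]
  have h2 : ∑ u, (c.qU s).p u * (ind (c.G u s) * c.beta u s) = c.bb s := by
    rw [bb]
    exact Finset.sum_congr rfl fun u _ => by ring
  rw [h1, h2]
  try ring

lemma main :
    ∃ (enc : Fin c.M → 𝓢 → FinPMF 𝓧) (dec : 𝓨 → FinPMF (Fin c.M)),
      pErrorGP c.M c.qS c.W enc dec ≤
        (∑ u, ∑ s, ∑ y, qUSY c.qS c.qU c.W c.f u s y *
          ind (Real.logb 2 (c.J : ℝ) - iUS c.qS c.qU u s < c.γ ∨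
               iUY c.qS c.qU c.W c.f u y - Real.logb 2 ((c.M : ℝ) * (c.J : ℝ)) < c.γ))
        + 3 * (2:ℝ) ^ (-c.γ) := by
  classical
  have hMR : (0:ℝ) < (c.M : ℝ) := by exact_mod_cast c.hM
  have hR0 : (0:ℝ) < (2:ℝ) ^ (-c.γ) := rpow_pos _
  haveI : Nonempty (Fin c.M → Fin c.J → 𝓤) := ⟨fun _ _ => Classical.choice c.nonempty_U⟩
  obtain ⟨C₀, _, hmin⟩ := Finset.exists_min_image Finset.univ
    (fun C => pErrorGP c.M c.qS c.W (c.enc C) (c.dec C)) Finset.univ_nonempty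
  refine ⟨c.enc C₀, c.dec C₀, ?_⟩
  have hA : pErrorGP c.M c.qS c.W (c.enc C₀) (c.dec C₀)
      ≤ c.EC (fun C => pErrorGP c.M c.qS c.W (c.enc C) (c.dec C)) := by
    unfold EC
    calc pErrorGP c.M c.qS c.W (c.enc C₀) (c.dec C₀)
        = ∑ C : Fin c.M → Fin c.J → 𝓤,
            c.wCb C * pErrorGP c.M c.qS c.W (c.enc C₀) (c.dec C₀) := by
          rw [← Finset.sum_mul, c.wCb_sum, one_mul]
      _ ≤ ∑ C : Fin c.M → Fin c.J → 𝓤,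
            c.wCb C * pErrorGP c.M c.qS c.W (c.enc C) (c.dec C) :=
          Finset.sum_le_sum fun C _ =>
            mul_le_mul_of_nonneg_left (hmin C (Finset.mem_univ C)) (c.wCb_nonneg C)
  have hB : c.EC (fun C => pErrorGP c.M c.qS c.W (c.enc C) (c.dec C))
      = ∑ m : Fin c.M, (1/(c.M:ℝ)) * ∑ s, c.qS.p s * c.EC (fun C => c.T C m s) := by
    calc c.EC (fun C => pErrorGP c.M c.qS c.W (c.enc C) (c.dec C))
        = c.EC (fun C => ∑ m, (1/(c.M:ℝ)) * ∑ s, c.qS.p s * c.T C m s) := by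
          exact congrArg c.EC (funext fun C => c.errEq C)
      _ = ∑ m : Fin c.M, c.EC (fun C => (1/(c.M:ℝ)) * ∑ s, c.qS.p s * c.T C m s) :=
          c.EC_sum Finset.univ _
      _ = ∑ m : Fin c.M, (1/(c.M:ℝ)) * ∑ s, c.qS.p s * c.EC (fun C => c.T C m s) := by
          refine Finset.sum_congr rfl fun m _ => ?_
          rw [c.EC_const_mul (1/(c.M:ℝ)) (fun C => ∑ s, c.qS.p s * c.T C m s)]
          congr 1
          rw [c.EC_sum Finset.univ (fun s C => c.qS.p s * c.T C m s)]
          exact Finset.sum_congr rfl fun s _ =>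
            c.EC_const_mul (c.qS.p s) (fun C => c.T C m s)
  have hC : ∀ m : Fin c.M, ∑ s, c.qS.p s * c.EC (fun C => c.T C m s)
      ≤ (∑ s, c.qS.p s * (1 - c.aa s + c.bb s)) + 2 * (2:ℝ) ^ (-c.γ) := by
    intro m
    calc ∑ s, c.qS.p s * c.EC (fun C => c.T C m s)
        ≤ ∑ s, c.qS.p s * ((1 - c.aa s + c.bb s) + 2 * (2:ℝ) ^ (-c.γ)) :=
          Finset.sum_le_sum fun s _ => c.qsEC_le m s
      _ = (∑ s, c.qS.p s * (1 - c.aa s + c.bb s))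
            + ∑ s, c.qS.p s * (2 * (2:ℝ) ^ (-c.γ)) := by
          simp only [mul_add]
          rw [Finset.sum_add_distrib]
      _ = (∑ s, c.qS.p s * (1 - c.aa s + c.bb s)) + 2 * (2:ℝ) ^ (-c.γ) := by
          rw [← Finset.sum_mul, c.qS.sum_eq_one, one_mul]
  have hev : (∑ s, c.qS.p s * (1 - c.aa s + c.bb s))
      = ∑ u, ∑ s, ∑ y, qUSY c.qS c.qU c.W c.f u s y *
          ind (Real.logb 2 (c.J : ℝ) - iUS c.qS c.qU u s < c.γ ∨
               iUY c.qS c.qU c.W c.f u y - Real.logb 2 ((c.M : ℝ) * (c.J : ℝ)) < c.γ) := by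
    rw [c.event_eq]
    refine Finset.sum_congr rfl fun u _ => ?_
    refine Finset.sum_congr rfl fun s _ => ?_
    refine Finset.sum_congr rfl fun y _ => ?_
    congr 1
    apply ind_congr
    constructor
    · rintro (h | h)
      · exact Or.inl (by rw [G] at h; exact not_le.mp h)
      · exact Or.inr (by rw [Pass] at h; exact not_le.mp h)
    · rintro (h | h)
      · exact Or.inl (by rw [G]; exact not_le.mpr h)
      · exact Or.inr (by rw [Pass]; exact not_le.mpr h)
  calc pErrorGP c.M c.qS c.W (c.enc C₀) (c.dec C₀)
      ≤ c.EC (fun C => pErrorGP c.M c.qS c.W (c.enc C) (c.dec C)) := hA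
    _ = ∑ m : Fin c.M, (1/(c.M:ℝ)) * ∑ s, c.qS.p s * c.EC (fun C => c.T C m s) := hB
    _ ≤ ∑ m : Fin c.M, (1/(c.M:ℝ)) *
          ((∑ s, c.qS.p s * (1 - c.aa s + c.bb s)) + 2 * (2:ℝ) ^ (-c.γ)) :=
        Finset.sum_le_sum fun m _ =>
          mul_le_mul_of_nonneg_left (hC m) (by positivity)
    _ = (∑ s, c.qS.p s * (1 - c.aa s + c.bb s)) + 2 * (2:ℝ) ^ (-c.γ) := by
        rw [Finset.sum_const, Finset.card_univ, Fintype.card_fin, nsmul_eq_mul]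
        field_simp
    _ ≤ (∑ s, c.qS.p s * (1 - c.aa s + c.bb s)) + 3 * (2:ℝ) ^ (-c.γ) := by linarith
    _ = _ := by rw [hev]

end GPC


/-- Loosened one-shot Gelfand–Pinsker bound: for every `γ > 0` there is an `M`-code with
`P(M̂ ≠ M) ≤ P_q[log J − i_q(U;S) < γ  or  i_q(U;Y) − log (M J) < γ] + 3·2^{−γ}`. -/
theorem oneShot_gelfand_pinsker_loosened (qS : FinPMF 𝓢) (W : 𝓧 → 𝓢 → FinPMF 𝓨)
    (qU : 𝓢 → FinPMF 𝓤) (f : 𝓤 → 𝓢 → 𝓧) (M J : ℕ) (hM : 0 < M) (hJ : 0 < J)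
    (γ : ℝ) (hγ : 0 < γ) :
    ∃ (enc : Fin M → 𝓢 → FinPMF 𝓧) (dec : 𝓨 → FinPMF (Fin M)),
      pErrorGP M qS W enc dec ≤
        (∑ u : 𝓤, ∑ s : 𝓢, ∑ y : 𝓨, qUSY qS qU W f u s y *
          ind (Real.logb 2 (J : ℝ) - iUS qS qU u s < γ ∨
               iUY qS qU W f u y - Real.logb 2 ((M : ℝ) * (J : ℝ)) < γ))
        + 3 * (2 : ℝ) ^ (-γ) := by
  exact GPC.main ⟨qS, qU, W, f, M, J, γ, hM, hJ, hγ⟩
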